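/- Let R be a commutative ring, ∂ : R → R a derivation, and A, B, f ∈ R with ∂A = 0, ∂B = 0, (∂f)² = 4·(f³ + A·f + B) and ∂(∂f) = 6·f² + 2·A. Define elements μ_{k,j} ∈ R for k ≥ 1 and j ∈ ℤ by: μ_{1,0} = 2·A, μ_{1,2} = 6, μ_{1,j} = 0 for all other j, and μ_{k+1,j} = (2j−2)(2j−1)·μ_{k,j−1} + (2j+1)(2j+2)·A·μ_{k,j+1} + (2j+2)(2j+4)·B·μ_{k,j+2}. Then μ_{k,j} = 0 whenever j < 0 or j > k+1, μ_{k,k+1} = (2k+1)!·1_R, and for every k ≥ 1 the 2k-th iterated derivative satisfies ∂^{2k} f = Σ_{j=0}^{k+1} μ_{k,j}·f^j. -/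

import Mathlib

/-- Elkies' 1992 identities: in a commutative ring `R` with a derivation `∂` and
elements `A, B, f` with `∂A = ∂B = 0`, `(∂f)² = 4(f³ + Af + B)` and
`∂²f = 6f² + 2A`, the constants `μ_{k,j}` defined by `μ_{1,0} = 2A`, `μ_{1,2} = 6`,
`μ_{1,j} = 0` otherwise, and the recurrence
`μ_{k+1,j} = (2j−2)(2j−1)·μ_{k,j−1} + (2j+1)(2j+2)·A·μ_{k,j+1} + (2j+2)(2j+4)·B·μ_{k,j+2}`
satisfy `μ_{k,j} = 0` for `j < 0` or `j > k+1`, `μ_{k,k+1} = (2k+1)!·1`, and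
`∂^{2k} f = Σ_{j=0}^{k+1} μ_{k,j}·f^j` for all `k ≥ 1`. -/
theorem elkies_mu_identities {R : Type*} [CommRing R] (der : R → R)
    (hadd : ∀ x y : R, der (x + y) = der x + der y)
    (hmul : ∀ x y : R, der (x * y) = x * der y + y * der x)
    (A B f : R) (hA : der A = 0) (hB : der B = 0)
    (hf : (der f) ^ 2 = 4 * (f ^ 3 + A * f + B))
    (hf2 : der (der f) = 6 * f ^ 2 + 2 * A)
    (μ : ℕ → ℤ → R)
    (hμ10 : μ 1 0 = 2 * A) (hμ12 : μ 1 2 = 6)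
    (hμ1 : ∀ j : ℤ, j ≠ 0 → j ≠ 2 → μ 1 j = 0)
    (hrec : ∀ k : ℕ, 1 ≤ k → ∀ j : ℤ,
      μ (k + 1) j = ((2 * j - 2) * (2 * j - 1)) • μ k (j - 1)
        + ((2 * j + 1) * (2 * j + 2)) • (A * μ k (j + 1))
        + ((2 * j + 2) * (2 * j + 4)) • (B * μ k (j + 2))) :
    (∀ k : ℕ, 1 ≤ k → ∀ j : ℤ, (j < 0 ∨ (k : ℤ) + 1 < j) → μ k j = 0) ∧
    (∀ k : ℕ, 1 ≤ k → μ k ((k : ℤ) + 1) = (2 * k + 1).factorial • (1 : R)) ∧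
    (∀ k : ℕ, 1 ≤ k → der^[2 * k] f = ∑ j ∈ Finset.range (k + 2), μ k (j : ℤ) * f ^ j) := by
  classical
  -- basic facts about the derivation
  have d0 : der 0 = 0 := by
    have h := hadd 0 0
    simp only [add_zero] at h
    nth_rewrite 1 [← add_zero (der 0)] at h
    exact (add_left_cancel h).symm
  have done1 : der 1 = 0 := by
    have h := hmul 1 1
    simp only [mul_one, one_mul] at h
    nth_rewrite 1 [← add_zero (der 1)] at h
    exact (add_left_cancel h).symm
  have dneg : ∀ x : R, der (-x) = - der x := by
    intro x
    have h : der (x + -x) = der x + der (-x) := hadd x (-x)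
    rw [add_neg_cancel, d0] at h
    exact eq_neg_of_add_eq_zero_right h.symm
  have dnsmul : ∀ (n : ℕ) (x : R), der (n • x) = n • der x := by
    intro n x
    induction n with
    | zero => simp [d0]
    | succ m ih => rw [succ_nsmul, hadd, ih, succ_nsmul]
  have dzsmul : ∀ (n : ℤ) (x : R), der (n • x) = n • der x := by
    intro n x
    induction n using Int.induction_on with
    | zero => simp [d0]
    | succ m ih => rw [add_smul, one_smul, hadd, ih, add_smul, one_smul]
    | pred m ih =>
        rw [sub_smul, one_smul, sub_eq_add_neg, hadd, dneg, ih, sub_smul, one_smul,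
          sub_eq_add_neg]
  have dsum : ∀ (s : Finset ℕ) (g : ℕ → R),
      der (∑ i ∈ s, g i) = ∑ i ∈ s, der (g i) := by
    intro s g
    induction s using Finset.induction_on with
    | empty => simp [d0]
    | insert _ _ hnotmem ih =>
        rw [Finset.sum_insert hnotmem, hadd, ih, Finset.sum_insert hnotmem]
  have dpow : ∀ n : ℕ, der (f ^ (n + 1)) = (n + 1) • (f ^ n * der f) := by
    intro n
    induction n with
    | zero => simp
    | succ m ih =>
        rw [pow_succ, hmul, ih]
        simp only [nsmul_eq_mul]
        push_cast
        ring
  -- second derivative of a power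
  have D2 : ∀ j : ℕ, der (der (f ^ j)) =
      ((2 * (j : ℤ)) * (2 * (j : ℤ) + 1)) • f ^ (j + 1)
      + ((2 * (j : ℤ)) * (2 * (j : ℤ) - 1)) • (A * f ^ (j - 1))
      + ((4 * (j : ℤ)) * ((j : ℤ) - 1)) • (B * f ^ (j - 2)) := by
    intro j
    match j with
    | 0 => simp [done1, d0]
    | 1 =>
        rw [pow_one, hf2]
        simp only [zsmul_eq_mul]
        push_cast
        ring
    | (m + 2) =>
        rw [dpow (m + 1), dnsmul, hmul, hf2, dpow m]
        have e1 : m + 2 - 1 = m + 1 := rfl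
        have e2 : m + 2 - 2 = m := rfl
        rw [e1, e2]
        simp only [nsmul_eq_mul, zsmul_eq_mul]
        push_cast
        linear_combination ((m : R) + 2) * ((m : R) + 1) * f ^ m * hf
  -- the combined induction
  have main : ∀ k : ℕ, 1 ≤ k →
      ((∀ j : ℤ, (j < 0 ∨ (k : ℤ) + 1 < j) → μ k j = 0) ∧
       (∀ j : ℤ, der (μ k j) = 0) ∧
       (μ k ((k : ℤ) + 1) = (2 * k + 1).factorial • (1 : R)) ∧
       (der^[2 * k] f = ∑ j ∈ Finset.range (k + 2), μ k (j : ℤ) * f ^ j)) := by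
    intro k hk
    induction k, hk using Nat.le_induction with
    | base =>
        refine ⟨?_, ?_, ?_, ?_⟩
        · intro j hj
          apply hμ1 <;> push_cast at hj <;> omega
        · intro j
          by_cases h0 : j = 0
          · subst h0
            rw [hμ10, show (2 : R) * A = A + A by ring, hadd, hA, add_zero]
          · by_cases h2 : j = 2
            · subst h2
              rw [hμ12, show (6 : R) = ((6 : ℕ) : R) by norm_num,
                show ((6 : ℕ) : R) = (6 : ℕ) • (1 : R) by simp, dnsmul, done1, smul_zero]
            · rw [hμ1 j h0 h2, d0]
        · push_cast
          rw [hμ12]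
          simp [Nat.factorial]
        · rw [show 2 * 1 = 1 + 1 by norm_num, Function.iterate_succ_apply',
            Function.iterate_succ_apply', Function.iterate_zero_apply, hf2]
          rw [Finset.sum_range_succ, Finset.sum_range_succ, Finset.sum_range_succ,
            Finset.sum_range_zero]
          push_cast
          rw [hμ10, hμ12, hμ1 1 (by norm_num) (by norm_num)]
          ring
    | succ k hk ih =>
        obtain ⟨V, C, L, D⟩ := ih
        have V' : ∀ j : ℤ, (j < 0 ∨ ((k : ℤ) + 1) + 1 < j) → μ (k + 1) j = 0 := by
          intro j hj
          rw [hrec k hk j]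
          have t1 : ((2 * j - 2) * (2 * j - 1)) • μ k (j - 1) = 0 := by
            rw [V (j - 1) (by omega), smul_zero]
          have t2 : ((2 * j + 1) * (2 * j + 2)) • (A * μ k (j + 1)) = 0 := by
            rcases eq_or_ne j (-1) with h | h
            · subst h; norm_num
            · rw [V (j + 1) (by omega), mul_zero, smul_zero]
          have t3 : ((2 * j + 2) * (2 * j + 4)) • (B * μ k (j + 2)) = 0 := by
            rcases eq_or_ne j (-1) with h | h
            · subst h; norm_num
            · rcases eq_or_ne j (-2) with h' | h'
              · subst h'; norm_num
              · rw [V (j + 2) (by omega), mul_zero, smul_zero]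
          rw [t1, t2, t3, add_zero, add_zero]
        have C' : ∀ j : ℤ, der (μ (k + 1) j) = 0 := by
          intro j
          rw [hrec k hk j, hadd, hadd, dzsmul, dzsmul, dzsmul, C, hmul, hmul, C, C, hA, hB]
          simp
        refine ⟨V', C', ?_, ?_⟩
        · -- leading coefficient
          rw [show (((k : ℕ) + 1 : ℕ) : ℤ) + 1 = ((k : ℤ) + 1) + 1 by push_cast; ring,
            hrec k hk]
          rw [show ((k : ℤ) + 1 + 1) - 1 = (k : ℤ) + 1 by ring, L]
          rw [V ((k : ℤ) + 1 + 1 + 1) (by omega), V ((k : ℤ) + 1 + 1 + 2) (by omega)]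
          rw [mul_zero, mul_zero, smul_zero, smul_zero, add_zero, add_zero]
          have hfac : (2 * (k + 1) + 1).factorial
              = (2 * (k + 1) + 1) * ((2 * (k + 1)) * (2 * k + 1).factorial) := by
            rw [show 2 * (k + 1) + 1 = 2 * k + 1 + 1 + 1 by ring, Nat.factorial_succ,
              Nat.factorial_succ]
            ring
          rw [hfac]
          simp only [smul_smul, nsmul_eq_mul, zsmul_eq_mul, mul_one]
          push_cast
          ring
        · -- the derivative identity
          have h1 : der^[2 * (k + 1)] f = der (der (der^[2 * k] f)) := by
            rw [show 2 * (k + 1) = 2 * k + 1 + 1 by ring, Function.iterate_succ_apply',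
              Function.iterate_succ_apply']
          rw [h1, D, dsum]
          have h2 : ∀ j ∈ Finset.range (k + 2),
              der (μ k (j : ℤ) * f ^ j) = μ k (j : ℤ) * der (f ^ j) := by
            intro j _
            rw [hmul, C, mul_zero, add_zero]
          rw [Finset.sum_congr rfl h2, dsum]
          have h3 : ∀ j ∈ Finset.range (k + 2),
              der (μ k (j : ℤ) * der (f ^ j)) = μ k (j : ℤ) * der (der (f ^ j)) := by
            intro j _
            rw [hmul, C, mul_zero, add_zero]
          rw [Finset.sum_congr rfl h3]
          have h4 : ∀ j ∈ Finset.range (k + 2),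
              μ k (j : ℤ) * der (der (f ^ j)) =
              ((2 * (j : ℤ)) * (2 * (j : ℤ) + 1)) • (μ k (j : ℤ) * f ^ (j + 1))
              + ((2 * (j : ℤ)) * (2 * (j : ℤ) - 1)) • (μ k (j : ℤ) * (A * f ^ (j - 1)))
              + ((4 * (j : ℤ)) * ((j : ℤ) - 1)) • (μ k (j : ℤ) * (B * f ^ (j - 2))) := by
            intro j _
            rw [D2 j, mul_add, mul_add, mul_smul_comm, mul_smul_comm, mul_smul_comm]
          rw [Finset.sum_congr rfl h4, Finset.sum_add_distrib, Finset.sum_add_distrib]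
          have h5 : ∀ n ∈ Finset.range (k + 3),
              μ (k + 1) (n : ℤ) * f ^ n =
              ((2 * (n : ℤ) - 2) * (2 * (n : ℤ) - 1)) • (μ k ((n : ℤ) - 1) * f ^ n)
              + ((2 * (n : ℤ) + 1) * (2 * (n : ℤ) + 2)) • (A * μ k ((n : ℤ) + 1) * f ^ n)
              + ((2 * (n : ℤ) + 2) * (2 * (n : ℤ) + 4)) • (B * μ k ((n : ℤ) + 2) * f ^ n) := by
            intro n _
            rw [hrec k hk (n : ℤ), add_mul, add_mul, smul_mul_assoc, smul_mul_assoc,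
              smul_mul_assoc, mul_assoc, mul_assoc]
          rw [show k + 1 + 2 = k + 3 by ring, Finset.sum_congr rfl h5,
            Finset.sum_add_distrib, Finset.sum_add_distrib]
          congr 1
          congr 1
          · -- S1 = T1
            conv_rhs => rw [show k + 3 = (k + 2) + 1 by ring, Finset.sum_range_succ']
            rw [show ((0 : ℕ) : ℤ) - 1 = -1 by norm_num, V (-1) (by omega)]
            rw [zero_mul, smul_zero, add_zero]
            apply Finset.sum_congr rfl
            intro i _
            push_cast
            rw [show ((i : ℤ) + 1) - 1 = (i : ℤ) by ring]
            congr 1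
            ring
          · -- S2 = T2
            conv_lhs => rw [Finset.sum_range_succ']
            conv_rhs => rw [show k + 3 = (k + 2) + 1 by ring, Finset.sum_range_succ,
              Finset.sum_range_succ]
            rw [V (((k + 2 : ℕ) : ℤ) + 1) (by push_cast; omega),
              V (((k + 1 : ℕ) : ℤ) + 1) (by push_cast; omega)]
            simp only [Nat.cast_zero, mul_zero, zero_mul, smul_zero, add_zero, zero_smul,
              mul_zero, zero_add]
            apply Finset.sum_congr rfl
            intro i _
            rw [show i + 1 - 1 = i from rfl]
            push_cast
            congr 1
            · ring
            · ring
          · -- S3 = T3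
            conv_lhs => rw [Finset.sum_range_succ', Finset.sum_range_succ']
            conv_rhs => rw [show k + 3 = (k + 2) + 1 by ring, Finset.sum_range_succ,
              Finset.sum_range_succ, Finset.sum_range_succ]
            rw [V (((k + 2 : ℕ) : ℤ) + 2) (by push_cast; omega),
              V (((k + 1 : ℕ) : ℤ) + 2) (by push_cast; omega),
              V (((k : ℕ) : ℤ) + 2) (by omega)]
            simp only [Nat.cast_zero, Nat.cast_one, Nat.cast_add, mul_zero, zero_mul,
              smul_zero, add_zero, zero_smul, zero_add]
            rw [show ((4 : ℤ) * 1 * (1 - 1)) = 0 by norm_num, zero_smul, add_zero]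
            apply Finset.sum_congr rfl
            intro i _
            rw [show i + 1 + 1 - 2 = i from rfl]
            push_cast
            congr 1
            · ring
            · ring
  refine ⟨fun k hk => (main k hk).1, fun k hk => (main k hk).2.2.1, fun k hk => (main k hk).2.2.2⟩
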